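/- Let M be a positive integer, 1 < q ≤ M+1, and x ∈ [0, M/(q-1)]. Define the switch region S_q as the union over j = 1,...,M of the intervals [j/q, (j-1)/q + M/(q²-q)]. An expansion (c_i) of x in base q is the unique expansion of x if and only if for every k ≥ 1, the tail value x_k := Σ_{i=0}^∞ c_{k+i}/q^{i+1} does not belong to S_q. -/

import Mathlib

open Set Filter

noncomputable def bval (q : ℝ) (c : ℕ → ℕ) : ℝ := ∑' i : ℕ, (c i : ℝ) / q ^ (i + 1)

lemma bsummable {M : ℕ} {q : ℝ} (hq1 : 1 < q) (c : ℕ → ℕ) (hc : ∀ i, c i ≤ M) :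
    Summable (fun i : ℕ => (c i : ℝ) / q ^ (i + 1)) := by
  have h0 : (0:ℝ) < q := lt_trans one_pos hq1
  have hgeo : Summable (fun i : ℕ => (M:ℝ) * (q⁻¹) ^ (i+1)) := by
    have : Summable (fun i : ℕ => (q⁻¹:ℝ) ^ i) :=
      summable_geometric_of_lt_one (by positivity) (inv_lt_one_of_one_lt₀ hq1)
    simpa [pow_succ, mul_comm, mul_assoc, mul_left_comm] using (this.mul_left ((M:ℝ) * q⁻¹))
  refine Summable.of_nonneg_of_le (fun i => by positivity) (fun i => ?_) hgeo
  rw [div_eq_mul_inv, ← inv_pow]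
  have : ((c i : ℝ)) ≤ M := by exact_mod_cast hc i
  exact mul_le_mul_of_nonneg_right this (by positivity)

lemma bval_nonneg {q : ℝ} (hq1 : 1 < q) (c : ℕ → ℕ) : 0 ≤ bval q c := by
  have h0 : (0:ℝ) < q := lt_trans one_pos hq1
  exact tsum_nonneg (fun i => by positivity)

lemma bval_le {M : ℕ} {q : ℝ} (hq1 : 1 < q) (c : ℕ → ℕ) (hc : ∀ i, c i ≤ M) :
    bval q c ≤ M / (q - 1) := by
  have h0 : (0:ℝ) < q := lt_trans one_pos hq1
  have hq' : (0:ℝ) < q - 1 := by linarith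
  have hsum : (∑' i : ℕ, (M:ℝ) * (q⁻¹) ^ (i+1)) = M / (q - 1) := by
    have hlt : (q⁻¹:ℝ) < 1 := inv_lt_one_of_one_lt₀ hq1
    have h : (∑' i : ℕ, (q⁻¹:ℝ) ^ i) = (1 - q⁻¹)⁻¹ := tsum_geometric_of_lt_one (by positivity) hlt
    calc (∑' i : ℕ, (M:ℝ) * (q⁻¹) ^ (i+1))
        = (M * q⁻¹) * ∑' i : ℕ, (q⁻¹:ℝ) ^ i := by
          rw [← tsum_mul_left]; congr 1; funext i; ring
      _ = (M * q⁻¹) * (1 - q⁻¹)⁻¹ := by rw [h]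
      _ = M / (q - 1) := by field_simp
  rw [← hsum, bval]
  have hgeo : Summable (fun i : ℕ => (M:ℝ) * (q⁻¹) ^ (i+1)) := by
    have : Summable (fun i : ℕ => (q⁻¹:ℝ) ^ i) :=
      summable_geometric_of_lt_one (by positivity) (inv_lt_one_of_one_lt₀ hq1)
    simpa [pow_succ, mul_comm, mul_assoc, mul_left_comm] using (this.mul_left ((M:ℝ) * q⁻¹))
  refine Summable.tsum_le_tsum (fun i => ?_) (bsummable hq1 c hc) hgeo
  rw [div_eq_mul_inv, ← inv_pow]
  have : ((c i : ℝ)) ≤ M := by exact_mod_cast hc i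
  exact mul_le_mul_of_nonneg_right this (by positivity)

lemma bval_shift {M : ℕ} {q : ℝ} (hq1 : 1 < q) (c : ℕ → ℕ) (hc : ∀ i, c i ≤ M) :
    bval q c = (c 0 : ℝ) / q + (bval q (fun i => c (i + 1))) / q := by
  have h0 : (0:ℝ) < q := lt_trans one_pos hq1
  have hs := bsummable hq1 c hc
  rw [bval, Summable.tsum_eq_zero_add hs]
  congr 1
  · norm_num
  · rw [bval, ← tsum_div_const]
    congr 1; funext i
    rw [pow_succ]; ring

noncomputable def gdig (M : ℕ) (q y : ℝ) : ℕ := min M ⌊q * y⌋₊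
noncomputable def gT (M : ℕ) (q y : ℝ) : ℝ := q * y - gdig M q y

lemma gdig_le (M : ℕ) (q y : ℝ) : gdig M q y ≤ M := min_le_left _ _

lemma gT_mem {M : ℕ} {q : ℝ} (hM : 0 < M) (hq1 : 1 < q) (hq2 : q ≤ M + 1)
    {y : ℝ} (hy : y ∈ Icc (0:ℝ) (M / (q-1))) : gT M q y ∈ Icc (0:ℝ) (M / (q-1)) := by
  have h0 : (0:ℝ) < q := lt_trans one_pos hq1
  have hq' : (0:ℝ) < q - 1 := by linarith
  have hy0 : 0 ≤ q * y := mul_nonneg h0.le hy.1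
  have hr1 : (1:ℝ) ≤ M / (q - 1) := by
    rw [le_div_iff₀ hq']; linarith
  constructor
  · have h1 : (gdig M q y : ℝ) ≤ ⌊q * y⌋₊ := by
      exact_mod_cast Nat.cast_le.mpr (min_le_right _ _)
    have h2 : (⌊q * y⌋₊ : ℝ) ≤ q * y := Nat.floor_le hy0
    simp only [gT]; linarith
  · rcases le_or_gt (⌊q * y⌋₊) M with h | h
    · have : gdig M q y = ⌊q * y⌋₊ := min_eq_right h
      rw [gT, this]
      have := Nat.lt_floor_add_one (q * y)
      linarith
    · have hg : gdig M q y = M := min_eq_left h.le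
      rw [gT, hg]
      have : q * y ≤ q * (M / (q - 1)) := mul_le_mul_of_nonneg_left hy.2 h0.le
      have heq : q * ((M:ℝ) / (q - 1)) = M + M / (q - 1) := by field_simp; ring
      linarith [heq ▸ this]

lemma greedy_partial {M : ℕ} {q : ℝ} (hq1 : 1 < q) (y : ℝ) (n : ℕ) :
    ∑ i ∈ Finset.range n, ((gdig M q ((gT M q)^[i] y) : ℝ) / q ^ (i + 1))
      = y - (gT M q)^[n] y / q ^ n := by
  have h0 : (0:ℝ) < q := lt_trans one_pos hq1
  induction n with
  | zero => simp
  | succ n ih =>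
    rw [Finset.sum_range_succ, ih, Function.iterate_succ_apply', gT]
    have hqn : (q:ℝ) ^ n ≠ 0 := by positivity
    field_simp
    ring

lemma greedy_exists {M : ℕ} {q : ℝ} (hM : 0 < M) (hq1 : 1 < q) (hq2 : q ≤ M + 1)
    {y : ℝ} (hy : y ∈ Icc (0:ℝ) (M / (q-1))) :
    ∃ d : ℕ → ℕ, (∀ i, d i ≤ M) ∧ (∑' i : ℕ, (d i : ℝ) / q ^ (i + 1)) = y := by
  have h0 : (0:ℝ) < q := lt_trans one_pos hq1
  set d : ℕ → ℕ := fun i => gdig M q ((gT M q)^[i] y) with hd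
  have hdM : ∀ i, d i ≤ M := fun i => gdig_le _ _ _
  refine ⟨d, hdM, ?_⟩
  have hiter : ∀ n, (gT M q)^[n] y ∈ Icc (0:ℝ) (M / (q-1)) := by
    intro n; induction n with
    | zero => simpa using hy
    | succ n ih => rw [Function.iterate_succ_apply']; exact gT_mem hM hq1 hq2 ih
  have hs : Summable (fun i : ℕ => (d i : ℝ) / q ^ (i + 1)) := bsummable hq1 d hdM
  have htend : Tendsto (fun n => ∑ i ∈ Finset.range n, ((d i : ℝ) / q ^ (i + 1))) atTop (nhds y) := by
    have heq : (fun n => ∑ i ∈ Finset.range n, ((d i : ℝ) / q ^ (i + 1)))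
        = fun n => y - (gT M q)^[n] y / q ^ n := by
      funext n; exact greedy_partial hq1 y n
    rw [heq]
    have hz : Tendsto (fun n => (gT M q)^[n] y / q ^ n) atTop (nhds 0) := by
      have hub : ∀ n : ℕ, (gT M q)^[n] y / q ^ n ≤ (↑M / (q-1)) * (q⁻¹) ^ n := by
        intro n
        rw [inv_pow, ← div_eq_mul_inv]
        gcongr
        exact (hiter n).2
      have hgb : Tendsto (fun n : ℕ => (↑M / (q-1)) * (q⁻¹) ^ n) atTop (nhds 0) := by
        simpa using (tendsto_pow_atTop_nhds_zero_of_lt_one (by positivity : (0:ℝ) ≤ q⁻¹)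
          (inv_lt_one_of_one_lt₀ hq1)).const_mul ((M:ℝ) / (q-1))
      exact squeeze_zero (fun n => div_nonneg ((hiter n).1) (by positivity)) hub hgb
    simpa using (tendsto_const_nhds.sub hz)
  exact tendsto_nhds_unique htend (hs.hasSum.tendsto_sum_nat) |>.symm
lemma tail_step {M : ℕ} {q : ℝ} (hq1 : 1 < q) (c : ℕ → ℕ) (hc : ∀ i, c i ≤ M) (k : ℕ) :
    bval q (fun i => c (k + i)) = (c k : ℝ) / q + bval q (fun i => c (k + 1 + i)) / q := by
  rw [bval_shift hq1 (fun i => c (k + i)) (fun i => hc _)]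
  simp only [Nat.add_zero]
  congr 3
  funext i; congr 1; omega

lemma tails_eq {M : ℕ} {q : ℝ} (hq1 : 1 < q) (c d : ℕ → ℕ) (hc : ∀ i, c i ≤ M)
    (hd : ∀ i, d i ≤ M) (h : bval q c = bval q d) (k : ℕ) (hlt : ∀ i < k, c i = d i) :
    bval q (fun i => c (k + i)) = bval q (fun i => d (k + i)) := by
  have h0 : (0:ℝ) < q := lt_trans one_pos hq1
  induction k with
  | zero => simpa using h
  | succ k ih =>
    have hk := ih (fun i hi => hlt i (by omega))
    rw [tail_step hq1 c hc k, tail_step hq1 d hd k, hlt k (by omega)] at hk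
    have h2 : bval q (fun i => c (k + 1 + i)) = bval q (fun i => d (k + 1 + i)) := by
      field_simp at hk; linarith
    exact h2

theorem stmt4 (M : ℕ) (hM : 0 < M) (q : ℝ) (hq1 : 1 < q) (hq2 : q ≤ M + 1)
    (x : ℝ) (hx : x ∈ Set.Icc (0 : ℝ) (M / (q - 1)))
    (c : ℕ → ℕ) (hc : ∀ i, c i ≤ M)
    (hcx : (∑' i : ℕ, (c i : ℝ) / q ^ (i + 1)) = x) :
    (∀ d : ℕ → ℕ, (∀ i, d i ≤ M) → (∑' i : ℕ, (d i : ℝ) / q ^ (i + 1)) = x → d = c) ↔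
      ∀ k : ℕ, ¬ ∃ j : ℕ, 1 ≤ j ∧ j ≤ M ∧
        (∑' i : ℕ, (c (k + i) : ℝ) / q ^ (i + 1)) ∈
          Set.Icc ((j : ℝ) / q) (((j : ℝ) - 1) / q + M / (q ^ 2 - q)) := by
  have h0 : (0:ℝ) < q := lt_trans one_pos hq1
  have hq' : (0:ℝ) < q - 1 := by linarith
  have hSrw : (M:ℝ) / (q ^ 2 - q) = ((M:ℝ) / (q - 1)) / q := by
    rw [div_div]; congr 1; ring
  -- tail values of c are in [0, M/(q-1)]
  have htail_mem : ∀ (e : ℕ → ℕ), (∀ i, e i ≤ M) → bval q e ∈ Set.Icc (0:ℝ) (M / (q-1)) :=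
    fun e he => ⟨bval_nonneg hq1 e, bval_le hq1 e he⟩
  constructor
  · -- uniqueness → no tail in switch region
    intro huniq k
    rintro ⟨j, hj1, hjM, hmem⟩
    set y : ℝ := bval q (fun i => c (k + i)) with hy
    have hmem' : (j:ℝ)/q ≤ y ∧ y ≤ ((j:ℝ)-1)/q + ((M:ℝ)/(q-1))/q := by
      rw [← hSrw]; exact ⟨hmem.1, hmem.2⟩
    set e : ℕ := if c k = j then j - 1 else j with he
    have hje : (e:ℝ) ≤ (j:ℝ) ∧ ((j:ℝ) - 1) ≤ (e:ℝ) ∧ e ≠ c k ∧ e ≤ M := by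
      by_cases hck : c k = j
      · simp only [he, if_pos hck]
        have : ((j - 1 : ℕ) : ℝ) = (j:ℝ) - 1 := by
          push_cast [Nat.cast_sub hj1]; norm_num
        refine ⟨by rw [this]; linarith, by rw [this], ?_, by omega⟩
        omega
      · simp only [he, if_neg hck]
        exact ⟨le_refl _, by linarith, fun h => hck h.symm, hjM⟩
    have hyb : q * y - (e:ℝ) ∈ Set.Icc (0:ℝ) ((M:ℝ)/(q-1)) := by
      constructor
      · have : (j:ℝ) ≤ q * y := by
          have := hmem'.1; rw [div_le_iff₀ h0] at this; linarith [this]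
        linarith [hje.1]
      · have : q * y ≤ ((j:ℝ)-1) + (M:ℝ)/(q-1) := by
          have := hmem'.2
          have h2 : q * y ≤ q * (((j:ℝ)-1)/q + ((M:ℝ)/(q-1))/q) :=
            mul_le_mul_of_nonneg_left this h0.le
          calc q * y ≤ q * (((j:ℝ)-1)/q + ((M:ℝ)/(q-1))/q) := h2
            _ = ((j:ℝ)-1) + (M:ℝ)/(q-1) := by field_simp
        linarith [hje.2.1]
    obtain ⟨g, hgM, hgval⟩ := greedy_exists hM hq1 hq2 hyb
    set d : ℕ → ℕ := fun i => if i < k then c i else if i = k then e else g (i - (k+1)) with hd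
    have hdM : ∀ i, d i ≤ M := by
      intro i; simp only [hd]
      split
      · exact hc i
      · split
        · exact hje.2.2.2
        · exact hgM _
    have hdk : d k = e := by simp [hd]
    have hdtail : (fun i => d (k + 1 + i)) = g := by
      funext i
      have h1 : ¬ (k + 1 + i < k) := by omega
      have h2 : ¬ (k + 1 + i = k) := by omega
      simp only [hd, if_neg h1, if_neg h2]
      congr 1; omega
    have hgood : bval q (fun i => d (k + i)) = y := by
      rw [tail_step hq1 d hdM k, hdtail, hdk]
      have : bval q g = q * y - (e:ℝ) := hgval
      rw [this]; field_simp; ring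
    -- propagate down to 0
    have hdown : ∀ n, n ≤ k → bval q (fun i => d ((k - n) + i)) = bval q (fun i => c ((k - n) + i)) := by
      intro n
      induction n with
      | zero => intro _; simpa using hgood
      | succ n ih =>
        intro hn
        have hkn := ih (by omega)
        set m := k - (n+1) with hm
        have hm1 : m + 1 = k - n := by omega
        have hdm : d m = c m := by
          have : m < k := by omega
          simp [hd, this]
        rw [tail_step hq1 d hdM m, tail_step hq1 c hc m, hdm]
        congr 2
        rw [← hm1] at hkn
        exact hkn
    have hzero := hdown k (le_refl k)
    simp only [Nat.sub_self, Nat.zero_add] at hzero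
    have hdx : (∑' i : ℕ, (d i : ℝ) / q ^ (i + 1)) = x := by
      have : bval q d = bval q c := hzero
      rw [show (∑' i : ℕ, (d i : ℝ) / q ^ (i + 1)) = bval q d from rfl, this,
        show bval q c = ∑' i : ℕ, (c i : ℝ) / q ^ (i + 1) from rfl, hcx]
    have := huniq d hdM hdx
    have : d k = c k := by rw [this]
    rw [hdk] at this
    exact hje.2.2.1 this
  · -- no tail in switch region → uniqueness
    intro hns d hdM hdx
    by_contra hne
    have hex : ∃ i, d i ≠ c i := Function.ne_iff.mp hne
    set k := Nat.find hex with hk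
    have hkne : d k ≠ c k := Nat.find_spec hex
    have hlt : ∀ i < k, d i = c i := fun i hi => not_not.mp (Nat.find_min hex hi)
    have hteq : bval q (fun i => d (k + i)) = bval q (fun i => c (k + i)) := by
      apply tails_eq hq1 d c hdM hc _ k hlt
      show (∑' i : ℕ, (d i : ℝ) / q ^ (i + 1)) = ∑' i : ℕ, (c i : ℝ) / q ^ (i + 1)
      rw [hdx, hcx]
    set y : ℝ := bval q (fun i => c (k + i)) with hy
    have hcb : (c k : ℝ)/q ≤ y ∧ y ≤ (c k : ℝ)/q + ((M:ℝ)/(q-1))/q := by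
      have hrec := tail_step hq1 c hc k
      have hrest := htail_mem (fun i => c (k + 1 + i)) (fun i => hc _)
      constructor
      · rw [← hy] at hrec
        have := hrest.1
        rw [hrec]
        have : 0 ≤ bval q (fun i => c (k + 1 + i)) / q := div_nonneg this h0.le
        linarith
      · rw [← hy] at hrec; rw [hrec]
        have := hrest.2
        have : bval q (fun i => c (k + 1 + i)) / q ≤ ((M:ℝ)/(q-1))/q :=
          div_le_div_of_nonneg_right this h0.le
        linarith
    have hdb : (d k : ℝ)/q ≤ y ∧ y ≤ (d k : ℝ)/q + ((M:ℝ)/(q-1))/q := by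
      have hrec := tail_step hq1 d hdM k
      have hrest := htail_mem (fun i => d (k + 1 + i)) (fun i => hdM _)
      rw [hteq] at hrec
      constructor
      · have : 0 ≤ bval q (fun i => d (k + 1 + i)) / q := div_nonneg hrest.1 h0.le
        linarith [hrec]
      · have : bval q (fun i => d (k + 1 + i)) / q ≤ ((M:ℝ)/(q-1))/q :=
          div_le_div_of_nonneg_right hrest.2 h0.le
        linarith [hrec]
    -- construct j
    set a := min (d k) (c k) with ha
    set b := max (d k) (c k) with hb
    have hab : a < b := by
      rcases Nat.lt_or_ge (d k) (c k) with h | h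
      · simp [ha, hb, min_eq_left h.le, max_eq_right h.le]; omega
      · have : c k < d k := by omega
        simp [ha, hb]; omega
    have hbM : b ≤ M := max_le (hdM k) (hc k)
    apply hns k
    refine ⟨a + 1, by omega, by omega, ?_, ?_⟩
    · -- lower bound: (a+1)/q ≤ y
      show ((a + 1 : ℕ) : ℝ) / q ≤ y
      have hby : (b : ℝ)/q ≤ y := by
        rcases max_choice (d k) (c k) with h | h
        · rw [hb, h]; exact hdb.1
        · rw [hb, h]; exact hcb.1
      have : ((a + 1 : ℕ) : ℝ) ≤ (b : ℝ) := by exact_mod_cast Nat.succ_le_of_lt hab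
      calc ((a + 1 : ℕ) : ℝ) / q ≤ (b:ℝ)/q := div_le_div_of_nonneg_right this h0.le
        _ ≤ y := hby
    · -- upper bound
      show y ≤ (((a + 1 : ℕ) : ℝ) - 1) / q + (M:ℝ) / (q^2 - q)
      have hay : y ≤ (a : ℝ)/q + ((M:ℝ)/(q-1))/q := by
        rcases min_choice (d k) (c k) with h | h
        · rw [ha, h]; exact hdb.2
        · rw [ha, h]; exact hcb.2
      have hcast : (((a + 1 : ℕ) : ℝ) - 1) = (a : ℝ) := by push_cast; ring
      rw [hcast, hSrw]
      exact hay
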